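/- (Structure of the optimal fractional area-bound solution.) Assume tasks are sorted by non-decreasing acceleration factor α_j = p̄_j/p_j. Let i be an index such that (1/m)·sum_{j<=i} p̄_j >= (1/k)·sum_{j>i} p_j and (1/m)·sum_{j<i} p̄_j <= (1/k)·sum_{j>=i} p_j. Then LB = (p_i · sum_{j<i} p̄_j + p̄_i · sum_{j>i} p_j + p̄_i·p_i) / (k·p̄_i + m·p_i) is a lower bound on the optimal makespan for scheduling these independent tasks on m CPUs and k GPUs. -/
import Mathlib

open Finset MeasureTheory

lemma load_le {ι : Type} [Fintype ι] (T : Finset ι) (s p : ι → ℝ) (C : ℝ)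
    (hC : 0 ≤ C) (hs : ∀ j ∈ T, 0 ≤ s j) (hp : ∀ j ∈ T, 0 ≤ p j)
    (hfin : ∀ j ∈ T, s j + p j ≤ C)
    (hdisj : ∀ j ∈ T, ∀ j' ∈ T, j ≠ j' →
      s j + p j ≤ s j' ∨ s j' + p j' ≤ s j) :
    ∑ j ∈ T, p j ≤ C := by
  have hpd : (T : Set ι).PairwiseDisjoint (fun j => Set.Ico (s j) (s j + p j)) := by
    intro a ha b hb hab
    rcases hdisj a ha b hb hab with h | h
    · exact Set.Ico_disjoint_Ico.mpr ((min_le_left _ _).trans (h.trans (le_max_right _ _)))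
    · exact Set.Ico_disjoint_Ico.mpr ((min_le_right _ _).trans (h.trans (le_max_left _ _)))
  have hmeas := measure_biUnion_finset (μ := volume) hpd
    (fun j _ => measurableSet_Ico)
  have hsub : (⋃ j ∈ T, Set.Ico (s j) (s j + p j)) ⊆ Set.Ico 0 C := by
    intro x hx
    simp only [Set.mem_iUnion] at hx
    obtain ⟨j, hj, hx⟩ := hx
    exact ⟨le_trans (hs j hj) hx.1, lt_of_lt_of_le hx.2 (hfin j hj)⟩
  have hle := (measure_mono hsub).trans_eq (by rw [Real.volume_Ico, sub_zero])
  rw [hmeas] at hle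
  have h2 : ∑ j ∈ T, ENNReal.ofReal (p j) ≤ ENNReal.ofReal C := by
    calc ∑ j ∈ T, ENNReal.ofReal (p j)
        = ∑ j ∈ T, volume (Set.Ico (s j) (s j + p j)) := by
          refine Finset.sum_congr rfl fun j hj => ?_
          rw [Real.volume_Ico, add_sub_cancel_left]
      _ ≤ ENNReal.ofReal C := hle
  rw [← ENNReal.ofReal_sum_of_nonneg hp] at h2
  exact (ENNReal.ofReal_le_ofReal_iff hC).mp h2



/-- A non-preemptive schedule of tasks (indexed by `ι`) on a heterogeneous
platform with `m` CPUs and `k` GPUs; task `j` takes time `pc j` on a CPU and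
`pg j` on a GPU. `cpu j = true` means `j` runs on CPU number `proc j`. -/
structure Sched (ι : Type) (m k : ℕ) (pc pg : ι → ℝ) where
  cpu : ι → Bool
  proc : ι → ℕ
  hproc : ∀ j, proc j < if cpu j then m else k
  start : ι → ℝ
  hstart : ∀ j, 0 ≤ start j
  disj : ∀ i j : ι, i ≠ j → cpu i = cpu j → proc i = proc j →
    start i + (if cpu i then pc i else pg i) ≤ start j ∨
    start j + (if cpu j then pc j else pg j) ≤ start i

/-- Processing time of task `j` on its assigned resource type. -/
def Sched.ptime {ι : Type} {m k : ℕ} {pc pg : ι → ℝ} (S : Sched ι m k pc pg)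
    (j : ι) : ℝ :=
  if S.cpu j then pc j else pg j

/-- Completion time of task `j`. -/
def Sched.finish {ι : Type} {m k : ℕ} {pc pg : ι → ℝ} (S : Sched ι m k pc pg)
    (j : ι) : ℝ :=
  S.start j + S.ptime j

/-- Processor `q` of type `b` (`true` = CPU) is busy at time `t`. -/
def Sched.busyAt {ι : Type} {m k : ℕ} {pc pg : ι → ℝ} (S : Sched ι m k pc pg)
    (b : Bool) (q : ℕ) (t : ℝ) : Prop :=
  ∃ j, S.cpu j = b ∧ S.proc j = q ∧ S.start j ≤ t ∧ t < S.finish j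

/-- Makespan: maximum completion time. -/
noncomputable def Sched.makespan {ι : Type} [Fintype ι] {m k : ℕ} {pc pg : ι → ℝ}
    (hne : Nonempty ι) (S : Sched ι m k pc pg) : ℝ :=
  Finset.univ.sup' (Finset.univ_nonempty_iff.mpr hne) S.finish

/-- List schedule: no processor (of either type) is idle while an
unstarted task remains. -/
def Sched.isList {ι : Type} {m k : ℕ} {pc pg : ι → ℝ}
    (S : Sched ι m k pc pg) : Prop :=
  ∀ t : ℝ, 0 ≤ t →
    (∃ (b : Bool) (q : ℕ), q < (if b then m else k) ∧ ¬ S.busyAt b q t) →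
    ∀ j, S.start j ≤ t

-- type-load bound: total work of tasks assigned to type b ≤ (#procs of type b) * C
lemma typeload_le {ι : Type} [Fintype ι] {m k : ℕ} {pc pg : ι → ℝ}
    (S : Sched ι m k pc pg) (b : Bool) (C : ℝ) (hC : 0 ≤ C)
    (hpt : ∀ j, 0 ≤ S.ptime j) (hfin : ∀ j, S.finish j ≤ C) :
    ∑ j ∈ Finset.univ.filter (fun j => S.cpu j = b), S.ptime j
      ≤ (if b then (m:ℝ) else (k:ℝ)) * C := by
  set M : ℕ := if b then m else k with hM
  have hmaps : ∀ j ∈ Finset.univ.filter (fun j => S.cpu j = b),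
      S.proc j ∈ Finset.range M := by
    intro j hj
    simp only [mem_filter] at hj
    have := S.hproc j
    rw [hj.2] at this
    simpa [hM] using this
  rw [← Finset.sum_fiberwise_of_maps_to hmaps]
  have hinner : ∀ q ∈ Finset.range M,
      ∑ j ∈ (Finset.univ.filter (fun j => S.cpu j = b)).filter
        (fun j => S.proc j = q), S.ptime j ≤ C := by
    intro q _
    refine load_le _ S.start S.ptime C hC (fun j _ => S.hstart j)
      (fun j _ => hpt j) (fun j _ => hfin j) ?_
    intro a ha b' hb hab
    simp only [mem_filter] at ha hb
    exact S.disj a b' hab (ha.1.2.trans hb.1.2.symm) (ha.2.trans hb.2.symm)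
  calc ∑ q ∈ Finset.range M, ∑ j ∈ (Finset.univ.filter (fun j => S.cpu j = b)).filter
        (fun j => S.proc j = q), S.ptime j
      ≤ ∑ q ∈ Finset.range M, C := Finset.sum_le_sum hinner
    _ = (M : ℝ) * C := by rw [Finset.sum_const, Finset.card_range, nsmul_eq_mul]
    _ = (if b then (m:ℝ) else (k:ℝ)) * C := by cases b <;> simp [hM]

/-- closed-form area-bound lower bound.  With tasks sorted by
non-decreasing acceleration factor `α_j = pc j / pg j` and pivot task `i`
satisfying the two balance conditions, the quantity
`LB = (pg i·∑_{j<i} pc j + pc i·∑_{j>i} pg j + pc i·pg i)/(k·pc i + m·pg i)`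
is a lower bound on the makespan of every feasible schedule. -/
theorem pivot_area_lower_bound
    (n m k : ℕ) (hn : 0 < n) (hm : 0 < m) (hk : 0 < k)
    (pc pg : Fin n → ℝ) (hpc : ∀ j, 0 < pc j) (hpg : ∀ j, 0 < pg j)
    (hsorted : ∀ i j : Fin n, i ≤ j → pc i * pg j ≤ pc j * pg i)
    (i : Fin n)
    (h1 : (1 / (k : ℝ)) * ∑ j ∈ Finset.univ.filter (fun j => i < j), pg j ≤
          (1 / (m : ℝ)) * ∑ j ∈ Finset.univ.filter (fun j => j ≤ i), pc j)
    (h2 : (1 / (m : ℝ)) * ∑ j ∈ Finset.univ.filter (fun j => j < i), pc j ≤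
          (1 / (k : ℝ)) * ∑ j ∈ Finset.univ.filter (fun j => i ≤ j), pg j)
    (LB : ℝ)
    (hLB : LB = (pg i * (∑ j ∈ Finset.univ.filter (fun j => j < i), pc j) +
                 pc i * (∑ j ∈ Finset.univ.filter (fun j => i < j), pg j) +
                 pc i * pg i) / (k * pc i + m * pg i))
    (S : Sched (Fin n) m k pc pg) :
    LB ≤ Sched.makespan ⟨⟨0, hn⟩⟩ S := by
  set C : ℝ := Sched.makespan ⟨⟨0, hn⟩⟩ S with hCdef
  have hpt : ∀ j, 0 < S.ptime j := by
    intro j; unfold Sched.ptime; split <;> [exact hpc j; exact hpg j]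
  have hfin : ∀ j, S.finish j ≤ C := fun j => Finset.le_sup' S.finish (mem_univ j)
  have hC : 0 ≤ C := by
    have := hfin ⟨0, hn⟩
    have h0 : 0 ≤ S.finish ⟨0, hn⟩ :=
      add_nonneg (S.hstart _) (hpt _).le
    linarith
  -- CPU and GPU loads
  have hcpu := typeload_le S true C hC (fun j => (hpt j).le) hfin
  have hgpu := typeload_le S false C hC (fun j => (hpt j).le) hfin
  simp only [if_true, if_false] at hcpu hgpu
  have hA : ∑ j ∈ Finset.univ.filter (fun j => S.cpu j = true), pc j ≤ (m:ℝ) * C := by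
    refine le_trans (le_of_eq ?_) hcpu
    refine Finset.sum_congr rfl fun j hj => ?_
    simp only [mem_filter] at hj
    simp [Sched.ptime, hj.2]
  have hB : ∑ j ∈ Finset.univ.filter (fun j => S.cpu j = false), pg j ≤ (k:ℝ) * C := by
    refine le_trans (le_of_eq ?_) hgpu
    refine Finset.sum_congr rfl fun j hj => ?_
    simp only [mem_filter] at hj
    simp [Sched.ptime, hj.2]
  -- pointwise bound: h j ≤ g j
  set g : Fin n → ℝ := fun j => if S.cpu j then pg i * pc j else pc i * pg j with hg
  set h : Fin n → ℝ := fun j =>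
    if j < i then pg i * pc j else if i < j then pc i * pg j else pc i * pg i with hh
  have hpoint : ∀ j, h j ≤ g j := by
    intro j
    simp only [hh, hg]
    rcases lt_trichotomy j i with hlt | heq | hgt
    · rw [if_pos hlt]
      cases hcj : S.cpu j
      · simp only [Bool.false_eq_true, if_false]
        linarith [hsorted j i hlt.le, mul_comm (pg i) (pc j)]
      · simp
    · subst heq
      cases hcj : S.cpu j <;> simp [lt_irrefl, mul_comm]
    · rw [if_neg (not_lt.mpr hgt.le), if_pos hgt]
      cases hcj : S.cpu j
      · simp
      · simp only [eq_self_iff_true, if_true]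
        linarith [hsorted i j hgt.le, mul_comm (pc j) (pg i)]
  -- sum of g equals pg i * A + pc i * B
  have hsumg : ∑ j, g j ≤ pg i * ((m:ℝ)*C) + pc i * ((k:ℝ)*C) := by
    have : ∑ j, g j =
        pg i * (∑ j ∈ Finset.univ.filter (fun j => S.cpu j = true), pc j) +
        pc i * (∑ j ∈ Finset.univ.filter (fun j => S.cpu j = false), pg j) := by
      rw [Finset.mul_sum, Finset.mul_sum,
        ← Finset.sum_filter_add_sum_filter_not Finset.univ (fun j => S.cpu j = true) g]
      congr 1
      · refine Finset.sum_congr rfl fun j hj => ?_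
        simp only [mem_filter] at hj; simp [hg, hj.2]
      · refine Finset.sum_congr (by ext j; simp) fun j hj => ?_
        simp only [mem_filter] at hj
        simp [hg, hj.2]
    rw [this]
    have h1' := mul_le_mul_of_nonneg_left hA (hpg i).le
    have h2' := mul_le_mul_of_nonneg_left hB (hpc i).le
    linarith
  -- sum of h equals the numerator
  have hsumh : ∑ j, h j =
      pg i * (∑ j ∈ Finset.univ.filter (fun j => j < i), pc j) +
      pc i * (∑ j ∈ Finset.univ.filter (fun j => i < j), pg j) + pc i * pg i := by
    rw [← Finset.sum_filter_add_sum_filter_not Finset.univ (fun j => j < i) h]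
    have e1 : Finset.univ.filter (fun j : Fin n => ¬ j < i) =
        insert i (Finset.univ.filter (fun j => i < j)) := by
      ext j
      simp only [mem_insert, mem_filter, mem_univ, true_and, not_lt]
      constructor
      · intro hij
        rcases eq_or_lt_of_le hij with h' | h'
        · exact Or.inl h'.symm
        · exact Or.inr h'
      · rintro (rfl | h') ; exact le_refl _ ; exact h'.le
    rw [e1, Finset.sum_insert (by simp)]
    have e2 : ∑ j ∈ Finset.univ.filter (fun j => j < i), h j =
        pg i * ∑ j ∈ Finset.univ.filter (fun j => j < i), pc j := by
      rw [Finset.mul_sum]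
      exact Finset.sum_congr rfl fun j hj => by
        simp only [mem_filter] at hj; simp [hh, hj.2]
    have e3 : h i = pc i * pg i := by simp [hh]
    have e4 : ∑ j ∈ Finset.univ.filter (fun j => i < j), h j =
        pc i * ∑ j ∈ Finset.univ.filter (fun j => i < j), pg j := by
      rw [Finset.mul_sum]
      refine Finset.sum_congr rfl fun j hj => ?_
      simp only [mem_filter] at hj
      simp [hh, hj.2, if_neg (not_lt.mpr hj.2.le)]
    rw [e2, e3, e4]; ring
  have hkey : pg i * (∑ j ∈ Finset.univ.filter (fun j => j < i), pc j) +
      pc i * (∑ j ∈ Finset.univ.filter (fun j => i < j), pg j) + pc i * pg i ≤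
      ((k:ℝ) * pc i + (m:ℝ) * pg i) * C := by
    calc _ = ∑ j, h j := hsumh.symm
      _ ≤ ∑ j, g j := Finset.sum_le_sum fun j _ => hpoint j
      _ ≤ pg i * ((m:ℝ)*C) + pc i * ((k:ℝ)*C) := hsumg
      _ = ((k:ℝ) * pc i + (m:ℝ) * pg i) * C := by ring
  have hD : (0:ℝ) < (k:ℝ) * pc i + (m:ℝ) * pg i :=
    add_pos (mul_pos (Nat.cast_pos.mpr hk) (hpc i))
      (mul_pos (Nat.cast_pos.mpr hm) (hpg i))
  rw [hLB, div_le_iff₀ hD]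
  linarith [hkey]
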